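/- Let p ≥ 2 and let γ : S¹ → ℝ² be a closed curve of class W^{2,p}. Then its length satisfies the lower bound L(γ) ≥ [ (2π)^p / (p E_p(γ)) ]^{1/(p−1)}. -/

import Mathlib

open MeasureTheory Filter Real Set intervalIntegral RealInnerProductSpace

noncomputable section

/-- The plane `ℝ²` as a Euclidean space. -/
abbrev V2 : Type := EuclideanSpace ℝ (Fin 2)

/-- Rotation by `π/2` in the plane. -/
def Rot (v : V2) : V2 := (WithLp.equiv 2 (Fin 2 → ℝ)).symm ![-(v 1), v 0]

/-- A closed curve of class `W^{2,p}(S¹;ℝ²)`, presented as a `1`-periodic function on `ℝ`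
together with its first derivative (classical, since `W^{2,p} ⊂ C¹`) and its second
(weak) derivative, which lies in `L^p`. -/
structure CurveW2p (p : ℝ) where
  f : ℝ → V2
  f' : ℝ → V2
  f'' : ℝ → V2
  per : Function.Periodic f 1
  per' : Function.Periodic f' 1
  per'' : Function.Periodic f'' 1
  hf' : ∀ x, HasDerivAt f (f' x) x
  hf'' : ∀ x, f' x = f' 0 + ∫ u in (0:ℝ)..x, f'' u
  memLp : MemLp f'' (ENNReal.ofReal p) (volume.restrict (Set.Ioc (0:ℝ) 1))

namespace CurveW2p

variable {p : ℝ}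

/-- The length of a closed curve. -/
def len (γ : CurveW2p p) : ℝ := ∫ x in (0:ℝ)..1, ‖γ.f' x‖

/-- The `p`-elastic energy `E_p(γ) = (1/p) ∫ |κ|^p ds`, written in an arbitrary
parametrisation: `κ = ⟨γ'', R γ'⟩ / |γ'|³` and `ds = |γ'| dx`. -/
def Ep (p : ℝ) (γ : CurveW2p p) : ℝ :=
  (1/p) * ∫ x in (0:ℝ)..1, |⟪γ.f'' x, Rot (γ.f' x)⟫| ^ p / ‖γ.f' x‖ ^ (3*p - 1)

/-- The modified `p`-elastic energy `𝓔_p(γ) = E_p(γ) + λ L(γ)`. -/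
def Emod (p lam : ℝ) (γ : CurveW2p p) : ℝ := Ep p γ + lam * γ.len

/-- Constant parametrisation: `|∂ₓγ(x)| ≡ L(γ)`; membership in the admissible class `AC`. -/
def constSpeed (γ : CurveW2p p) : Prop := ∀ x, ‖γ.f' x‖ = γ.len

/-- The signed curvature of a constant-speed curve. -/
def curv (γ : CurveW2p p) (x : ℝ) : ℝ := ⟪γ.f'' x, Rot (γ.f' x)⟫ / γ.len ^ 3

/-- A substitute for the `W^{2,p}(S¹)` norm. -/
def W2pNorm (p : ℝ) (γ : CurveW2p p) : ℝ :=
  (∫ x in (0:ℝ)..1, ‖γ.f x‖ ^ p) ^ (1/p) + (∫ x in (0:ℝ)..1, ‖γ.f' x‖ ^ p) ^ (1/p)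
    + (∫ x in (0:ℝ)..1, ‖γ.f'' x‖ ^ p) ^ (1/p)

end CurveW2p

open CurveW2p

/-- The penalisation `P_n(γ, γ̃) = (L(γ̃)/(2τ)) ∫₀¹ |γ − γ̃|² dx`. -/
def Pfun {p : ℝ} (tau : ℝ) (γ γt : CurveW2p p) : ℝ :=
  (γt.len / (2*tau)) * ∫ x in (0:ℝ)..1, ‖γ.f x - γt.f x‖^2

/-- The minimizing-movement functional `G(γ) = 𝓔_p(γ) + P_n(γ, γ̃)`. -/
def Gfun (p lam tau : ℝ) (γt γ : CurveW2p p) : ℝ := Emod p lam γ + Pfun tau γ γt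

/-- `γm` minimises `G = 𝓔_p + P_n(·, γprev)` over the admissible class `AC`. -/
def IsMinimizer (p lam tau : ℝ) (γprev γm : CurveW2p p) : Prop :=
  constSpeed γm ∧ ∀ γ : CurveW2p p, constSpeed γ →
    Gfun p lam tau γprev γm ≤ Gfun p lam tau γprev γ

/-- A minimizing-movements chain `γ_{0,n} = γ₀`, `γ_{i,n}` minimising
`𝓔_p(·) + P_n(·, γ_{i−1,n})` over `AC`, for `1 ≤ i ≤ n`, with time step `τ_n = T/n`. -/
def IsMMChain (p lam T : ℝ) (n : ℕ) (γ0 : CurveW2p p) (γseq : ℕ → CurveW2p p) : Prop :=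
  γseq 0 = γ0 ∧ ∀ i, 1 ≤ i → i ≤ n → IsMinimizer p lam (T/n) (γseq (i-1)) (γseq i)

/-- The function `Φ₁(γ,η)(x) = (1/L(γ)²)(x∫₀¹ γ'·η' − ∫₀ˣ γ'·η')`. -/
def Phi1 {p : ℝ} (γ η : CurveW2p p) (x : ℝ) : ℝ :=
  (1 / γ.len^2) * (x * ∫ u in (0:ℝ)..1, ⟪γ.f' u, η.f' u⟫
      - ∫ u in (0:ℝ)..x, ⟪γ.f' u, η.f' u⟫)

/-- `g : ℝ → ℝ²` (1-periodic) belongs to the admissible class `AC`: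
it is `W^{2,p}` with `|g'| ≡ L(g)`. -/
def InAC (p : ℝ) (g : ℝ → V2) : Prop :=
  ∃ γ : CurveW2p p, γ.f = g ∧ constSpeed γ

/-- Piecewise linear interpolation of a minimizing-movements chain (position). -/
def plin (p T : ℝ) (n : ℕ) (γseq : ℕ → CurveW2p p) (t x : ℝ) : V2 :=
  ((γseq (⌊t / (T/n)⌋.toNat)).f x) +
    ((t - (⌊t / (T/n)⌋.toNat : ℝ) * (T/n)) / (T/n)) •
      ((γseq (⌊t / (T/n)⌋.toNat + 1)).f x - (γseq (⌊t / (T/n)⌋.toNat)).f x)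

/-- Piecewise linear interpolation: first spatial derivative. -/
def plin1 (p T : ℝ) (n : ℕ) (γseq : ℕ → CurveW2p p) (t x : ℝ) : V2 :=
  ((γseq (⌊t / (T/n)⌋.toNat)).f' x) +
    ((t - (⌊t / (T/n)⌋.toNat : ℝ) * (T/n)) / (T/n)) •
      ((γseq (⌊t / (T/n)⌋.toNat + 1)).f' x - (γseq (⌊t / (T/n)⌋.toNat)).f' x)

/-- Piecewise linear interpolation: second spatial derivative. -/
def plin2 (p T : ℝ) (n : ℕ) (γseq : ℕ → CurveW2p p) (t x : ℝ) : V2 :=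
  ((γseq (⌊t / (T/n)⌋.toNat)).f'' x) +
    ((t - (⌊t / (T/n)⌋.toNat : ℝ) * (T/n)) / (T/n)) •
      ((γseq (⌊t / (T/n)⌋.toNat + 1)).f'' x - (γseq (⌊t / (T/n)⌋.toNat)).f'' x)

/-- The piecewise constant velocity `V_n(·,t) = (γ_{i,n} − γ_{i−1,n})/τ_n`. -/
def pconstV (p T : ℝ) (n : ℕ) (γseq : ℕ → CurveW2p p) (t x : ℝ) : V2 :=
  (T/n)⁻¹ • ((γseq (⌊t / (T/n)⌋.toNat + 1)).f x - (γseq (⌊t / (T/n)⌋.toNat)).f x)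

/-- Right-endpoint piecewise constant interpolation `γ̃_n(·,t) = γ_{i,n}` on `((i−1)τ_n, iτ_n]`. -/
def pconstR (p T : ℝ) (n : ℕ) (γseq : ℕ → CurveW2p p) (t : ℝ) : CurveW2p p :=
  γseq (⌈t / (T/n)⌉.toNat)

/-- Left-endpoint piecewise constant interpolation `Γ̃_n(·,t) = γ_{i−1,n}` on `((i−1)τ_n, iτ_n]`. -/
def pconstL (p T : ℝ) (n : ℕ) (γseq : ℕ → CurveW2p p) (t : ℝ) : CurveW2p p :=
  γseq (⌈t / (T/n)⌉.toNat - 1)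

/-- Weak convergence on the space–time cylinder `(0,T) × S¹`, tested against
continuous test functions. -/
def WeakConvCyl (T : ℝ) (g : ℕ → ℝ → ℝ → V2) (glim : ℝ → ℝ → V2) : Prop :=
  ∀ η : ℝ → ℝ → V2, Continuous (Function.uncurry η) →
    Tendsto (fun k => ∫ t in (0:ℝ)..T, ∫ x in (0:ℝ)..1, ⟪g k t x, η t x⟫) atTop
      (nhds (∫ t in (0:ℝ)..T, ∫ x in (0:ℝ)..1, ⟪glim t x, η t x⟫))

/-- The conclusion of the compactness step (Lemma 3.9): `γ` (as the family `Γ` of curves,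
with velocity `v`) is a subsequential limit of the minimizing-movements interpolations:
weak-* in `L^∞(0,T;W^{2,p})` (uniform bound plus distributional convergence of `γ_n` and
its spatial derivatives) and weak in `H¹(0,T;L²)`. -/
structure IsMMLimit (p lam T : ℝ) (γ0 : CurveW2p p) (γseq : ℕ → ℕ → CurveW2p p)
    (Γ : ℝ → CurveW2p p) (v : ℝ → ℝ → V2) (φ : ℕ → ℕ) : Prop where
  chain : ∀ n, 1 ≤ n → IsMMChain p lam T n γ0 (γseq n)
  mono : StrictMono φ
  hφ : ∀ k, 1 ≤ φ k
  conv0 : WeakConvCyl T (fun k => plin p T (φ k) (γseq (φ k))) (fun t x => (Γ t).f x)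
  conv1 : WeakConvCyl T (fun k => plin1 p T (φ k) (γseq (φ k))) (fun t x => (Γ t).f' x)
  conv2 : WeakConvCyl T (fun k => plin2 p T (φ k) (γseq (φ k))) (fun t x => (Γ t).f'' x)
  bound : ∃ M, ∀ t ∈ Set.Icc (0:ℝ) T, W2pNorm p (Γ t) ≤ M
  convV : WeakConvCyl T (fun k => pconstV p T (φ k) (γseq (φ k))) v
  measv : Measurable fun q : ℝ × ℝ => v q.1 q.2
  vL2 : IntegrableOn (fun q : ℝ × ℝ => ‖v q.1 q.2‖^2)
      (Set.Ioc (0:ℝ) T ×ˢ Set.Ioc (0:ℝ) 1) volume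
  ft : ∀ t ∈ Set.Icc (0:ℝ) T, ∀ x, (Γ t).f x = γ0.f x + ∫ s in (0:ℝ)..t, v s x

/-- The space–time weak form of the `p`-elastic flow (with constant parametrisation),
tested against `η ∈ L^∞(0,T;W^{2,p})`. -/
def weakForm (p lam T : ℝ) (Γ : ℝ → CurveW2p p) (v : ℝ → ℝ → V2)
    (η : ℝ → CurveW2p p) : ℝ :=
  ∫ t in (0:ℝ)..T, ∫ x in (0:ℝ)..1,
    (‖(Γ t).f'' x‖ ^ (p-2) * ⟪(Γ t).f'' x, (η t).f'' x⟫ / (Γ t).len ^ (2*p-1)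
      - ((2*p-1)/p) * ‖(Γ t).f'' x‖ ^ p * ⟪(Γ t).f' x, (η t).f' x⟫ / (Γ t).len ^ (2*p+1)
      + (lam / (Γ t).len) * ⟪(Γ t).f' x, (η t).f' x⟫
      + (Γ t).len * ⟪v t x, (η t).f x⟫)

/-- An admissible test function `η ∈ L^∞(0,T;W^{2,p}(S¹;ℝ²))` (with joint measurability). -/
def TestLinftyW2p (p T : ℝ) (η : ℝ → CurveW2p p) : Prop :=
  (∃ M, ∀ t ∈ Set.Icc (0:ℝ) T, W2pNorm p (η t) ≤ M) ∧
    Measurable (fun q : ℝ × ℝ => (η q.1).f q.2) ∧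
    Measurable (fun q : ℝ × ℝ => (η q.1).f' q.2) ∧
    Measurable (fun q : ℝ × ℝ => (η q.1).f'' q.2)

/-- Weak solution of problem (P) on `S¹ × [0,T]` with initial datum `γ0`
(Definition 1.1): (i) regularity, (ii) the weak form, (iii) `γ(t) ∈ AC` a.e.,
(iv) the initial condition. -/
structure IsWeakSolution (p lam T : ℝ) (γ0 : CurveW2p p)
    (Γ : ℝ → CurveW2p p) (v : ℝ → ℝ → V2) : Prop where
  bound : ∃ M, ∀ t ∈ Set.Icc (0:ℝ) T, W2pNorm p (Γ t) ≤ M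
  measf : Measurable fun q : ℝ × ℝ => (Γ q.1).f q.2
  measf' : Measurable fun q : ℝ × ℝ => (Γ q.1).f' q.2
  measf'' : Measurable fun q : ℝ × ℝ => (Γ q.1).f'' q.2
  measv : Measurable fun q : ℝ × ℝ => v q.1 q.2
  vL2 : IntegrableOn (fun q : ℝ × ℝ => ‖v q.1 q.2‖^2)
      (Set.Ioc (0:ℝ) T ×ˢ Set.Ioc (0:ℝ) 1) volume
  ft : ∀ t ∈ Set.Icc (0:ℝ) T, ∀ x, (Γ t).f x = γ0.f x + ∫ s in (0:ℝ)..t, v s x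
  weak : ∀ η : ℝ → CurveW2p p, TestLinftyW2p p T η → weakForm p lam T Γ v η = 0
  acAE : ∀ᵐ t ∂(volume.restrict (Set.Ioc (0:ℝ) T)), constSpeed (Γ t)
  init : (Γ 0).f = γ0.f

end

noncomputable section
open CurveW2p

set_option synthInstance.maxHeartbeats 1000000 in
private lemma ACchain {E E' : Type*} [NormedAddCommGroup E] [NormedSpace ℝ E] [ProperSpace E]
    [NormedAddCommGroup E'] [NormedSpace ℝ E'] [CompleteSpace E']
    {Φ : E → E'} {Φ' : E → E →L[ℝ] E'}
    (hΦd : ∀ y, HasFDerivAt Φ (Φ' y) y) (hΦ'c : Continuous Φ')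
    {F G : ℝ → E} (hG : Integrable G volume)
    (hF : ∀ x ∈ Set.Icc (0:ℝ) 1, F x = F 0 + ∫ u in (0:ℝ)..x, G u)
    {x : ℝ} (hx : x ∈ Set.Icc (0:ℝ) 1) :
    Φ (F x) = Φ (F 0) + ∫ u in (0:ℝ)..x, Φ' (F u) (G u) := by
  obtain ⟨hx0, hx1⟩ := hx
  have hΦc : Continuous Φ := continuous_iff_continuousAt.2 fun y => (hΦd y).continuousAt
  -- continuity of F on Icc 0 1
  have hFc : ContinuousOn F (Icc (0:ℝ) 1) := by
    have h1 : ContinuousOn (fun y => F 0 + ∫ u in (0:ℝ)..y, G u) (Icc (0:ℝ) 1) := by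
      refine continuousOn_const.add ?_
      have := intervalIntegral.continuousOn_primitive_interval
        (f := G) (μ := volume) (a := (0:ℝ)) (b := 1) (hG.integrableOn)
      rwa [Set.uIcc_of_le (zero_le_one)] at this
    exact h1.congr hF
  -- compact sets
  set K : Set E := F '' (Icc 0 1) with hKdef
  have hK : IsCompact K := isCompact_Icc.image_of_continuousOn hFc
  set K' : Set E := Metric.cthickening 1 K with hK'def
  have hK' : IsCompact K' := hK.cthickening
  have hKK' : K ⊆ K' := Metric.self_subset_cthickening K
  obtain ⟨M, hM⟩ := hK'.exists_bound_of_continuousOn (hΦ'c.continuousOn (s := K'))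
  have hF0K : F 0 ∈ K := ⟨0, ⟨le_refl _, zero_le_one⟩, rfl⟩
  have hM0 : 0 ≤ M := le_trans (norm_nonneg _) (hM (F 0) (hKK' hF0K))
  -- approximations
  have happrox : ∀ n : ℕ, ∃ g : ℝ → E, Continuous g ∧ Integrable g volume ∧
      (∫ u, ‖G u - g u‖) ≤ 1/(n+1 : ℝ) := by
    intro n
    obtain ⟨g, _, hint, hc, hi⟩ := hG.exists_hasCompactSupport_integral_sub_le
      (ε := 1/(n+1:ℝ)) (by positivity)
    exact ⟨g, hc, hi, hint⟩
  choose gs hgc hgi hge using happrox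
  set Fs : ℕ → ℝ → E := fun n y => F 0 + ∫ u in (0:ℝ)..y, gs n u with hFsdef
  have hsubint : ∀ n, Integrable (fun u => G u - gs n u) volume := fun n => hG.sub (hgi n)
  -- distance bound
  have hdist : ∀ n : ℕ, ∀ y ∈ Icc (0:ℝ) 1, ‖Fs n y - F y‖ ≤ 1/(n+1:ℝ) := by
    intro n y hy
    have : Fs n y - F y = ∫ u in (0:ℝ)..y, (gs n u - G u) := by
      rw [hF y hy, intervalIntegral.integral_sub ((hgi n).intervalIntegrable)
        (hG.intervalIntegrable)]
      simp only [hFsdef]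
      abel
    rw [this]
    calc ‖∫ u in (0:ℝ)..y, (gs n u - G u)‖ ≤ ∫ u in (0:ℝ)..y, ‖gs n u - G u‖ :=
          intervalIntegral.norm_integral_le_integral_norm hy.1
      _ ≤ ∫ u, ‖gs n u - G u‖ := by
          rw [intervalIntegral.integral_of_le hy.1]
          exact setIntegral_le_integral ((hsubint n).norm.congr
            (Eventually.of_forall fun u => (norm_sub_rev _ _))) 
            (Eventually.of_forall fun u => norm_nonneg _)
      _ = ∫ u, ‖G u - gs n u‖ := by
          congr 1; funext u; exact norm_sub_rev _ _
      _ ≤ 1/(n+1:ℝ) := hge n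
  have hmem : ∀ n : ℕ, ∀ y ∈ Icc (0:ℝ) 1, Fs n y ∈ K' := by
    intro n y hy
    refine Metric.mem_cthickening_of_dist_le _ (F y) _ _ ⟨y, hy, rfl⟩ ?_
    rw [dist_eq_norm]
    exact le_trans (hdist n y hy) (by
      rw [div_le_one (by positivity)]; linarith [Nat.cast_nonneg (α := ℝ) n])
  -- derivative of Fs
  have hFsd : ∀ n y, HasDerivAt (Fs n) (gs n y) y := by
    intro n y
    exact (intervalIntegral.integral_hasDerivAt_right ((hgi n).intervalIntegrable)
      ((hgc n).stronglyMeasurableAtFilter _ _) (hgc n).continuousAt).const_add (F 0)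
  have hFscont : ∀ n, Continuous (Fs n) :=
    fun n => continuous_iff_continuousAt.2 fun y => (hFsd n y).continuousAt
  -- FTC for smooth approximations
  have hFTC : ∀ n : ℕ, Φ (Fs n x) = Φ (F 0) + ∫ u in (0:ℝ)..x, Φ' (Fs n u) (gs n u) := by
    intro n
    have hderiv : ∀ u ∈ Set.uIcc (0:ℝ) x, HasDerivAt (Φ ∘ Fs n) (Φ' (Fs n u) (gs n u)) u :=
      fun u _ => (hΦd (Fs n u)).comp_hasDerivAt u (hFsd n u)
    have hint : IntervalIntegrable (fun u => Φ' (Fs n u) (gs n u)) volume 0 x :=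
      ((hΦ'c.comp (hFscont n)).clm_apply (hgc n)).intervalIntegrable 0 x
    have := intervalIntegral.integral_eq_sub_of_hasDerivAt hderiv hint
    have hFs0 : Fs n 0 = F 0 := by simp [hFsdef]
    rw [this]
    simp [Function.comp, hFs0]
  -- integrability of the limit integrand
  have hGr : AEStronglyMeasurable G (volume.restrict (Icc (0:ℝ) 1)) :=
    hG.aestronglyMeasurable.restrict
  have hlimint : IntegrableOn (fun u => Φ' (F u) (G u)) (Icc (0:ℝ) 1) volume := by
    have hmeas : AEStronglyMeasurable (fun u => Φ' (F u) (G u))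
        (volume.restrict (Icc (0:ℝ) 1)) :=
      (ContinuousLinearMap.apply ℝ E').flip.aestronglyMeasurable_comp₂
        ((hΦ'c.comp_continuousOn hFc).aestronglyMeasurable measurableSet_Icc) hGr
    refine Integrable.mono' ((hG.norm.const_mul M).integrableOn) hmeas ?_
    refine (ae_restrict_iff' measurableSet_Icc).2 (Eventually.of_forall fun u hu => ?_)
    calc ‖Φ' (F u) (G u)‖ ≤ ‖Φ' (F u)‖ * ‖G u‖ := (Φ' (F u)).le_opNorm _
      _ ≤ M * ‖G u‖ :=
        mul_le_mul_of_nonneg_right (hM (F u) (hKK' ⟨u, hu, rfl⟩)) (norm_nonneg _)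
  have hlimII : IntervalIntegrable (fun u => Φ' (F u) (G u)) volume 0 x := by
    refine IntegrableOn.intervalIntegrable ?_
    rw [Set.uIcc_of_le hx0]
    exact hlimint.mono_set (Set.Icc_subset_Icc le_rfl hx1)
  have htend0 : Tendsto (fun n : ℕ => 1/((n:ℝ)+1)) atTop (nhds 0) :=
    tendsto_one_div_add_atTop_nhds_zero_nat
  -- first limit
  have hL1 : Tendsto (fun n => Φ (Fs n x)) atTop (nhds (Φ (F x))) := by
    have hFsx : Tendsto (fun n => Fs n x) atTop (nhds (F x)) := by
      rw [tendsto_iff_norm_sub_tendsto_zero]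
      exact squeeze_zero (fun n => norm_nonneg _) (fun n => hdist n x ⟨hx0, hx1⟩) htend0
    exact (hΦc.tendsto (F x)).comp hFsx
  -- second limit
  have hC0 : 0 ≤ ∫ u, ‖G u‖ := integral_nonneg fun u => norm_nonneg _
  set C : ℝ := ∫ u, ‖G u‖ with hCdef
  have hL2 : Tendsto (fun n => ∫ u in (0:ℝ)..x, Φ' (Fs n u) (gs n u)) atTop
      (nhds (∫ u in (0:ℝ)..x, Φ' (F u) (G u))) := by
    rw [Metric.tendsto_atTop]
    intro ε hε
    have hε' : 0 < ε/(2*(C+1)) := by positivity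
    obtain ⟨δ, hδ0, hδ⟩ := Metric.uniformContinuousOn_iff.1
      (hK'.uniformContinuousOn_of_continuous hΦ'c.continuousOn) (ε/(2*(C+1))) hε'
    obtain ⟨N₁, hN₁⟩ := Metric.tendsto_atTop.1 htend0 δ hδ0
    obtain ⟨N₂, hN₂⟩ := Metric.tendsto_atTop.1 (htend0.const_mul M) (ε/2) (by positivity)
    refine ⟨max N₁ N₂, fun n hn => ?_⟩
    have hn1 : 1/((n:ℝ)+1) < δ := by
      have := hN₁ n (le_trans (le_max_left _ _) hn)
      rw [Real.dist_eq, sub_zero, abs_of_nonneg (by positivity)] at this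
      exact this
    have hn2 : M * (1/((n:ℝ)+1)) < ε/2 := by
      have := hN₂ n (le_trans (le_max_right _ _) hn)
      rw [Real.dist_eq, mul_zero, sub_zero] at this
      exact lt_of_le_of_lt (le_abs_self _) this
    have hnII : IntervalIntegrable (fun u => Φ' (Fs n u) (gs n u)) volume 0 x :=
      ((hΦ'c.comp (hFscont n)).clm_apply (hgc n)).intervalIntegrable 0 x
    rw [dist_eq_norm, ← intervalIntegral.integral_sub hnII hlimII]
    have hbnd : ∀ u ∈ Icc (0:ℝ) x,
        ‖Φ' (Fs n u) (gs n u) - Φ' (F u) (G u)‖ ≤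
          M * ‖G u - gs n u‖ + (ε/(2*(C+1))) * ‖G u‖ := by
      intro u hu
      have hu1 : u ∈ Icc (0:ℝ) 1 := ⟨hu.1, le_trans hu.2 hx1⟩
      have hd : dist (Fs n u) (F u) < δ := by
        rw [dist_eq_norm]
        exact lt_of_le_of_lt (hdist n u hu1) hn1
      have huc : dist (Φ' (Fs n u)) (Φ' (F u)) < ε/(2*(C+1)) :=
        hδ (Fs n u) (hmem n u hu1) (F u) (hKK' ⟨u, hu1, rfl⟩) hd
      calc ‖Φ' (Fs n u) (gs n u) - Φ' (F u) (G u)‖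
          ≤ ‖Φ' (Fs n u) (gs n u) - Φ' (Fs n u) (G u)‖
            + ‖Φ' (Fs n u) (G u) - Φ' (F u) (G u)‖ :=
            norm_sub_le_norm_sub_add_norm_sub _ _ _
        _ ≤ M * ‖G u - gs n u‖ + (ε/(2*(C+1))) * ‖G u‖ := by
            refine add_le_add ?_ ?_
            · rw [← map_sub]
              calc ‖Φ' (Fs n u) (gs n u - G u)‖ ≤ ‖Φ' (Fs n u)‖ * ‖gs n u - G u‖ :=
                    (Φ' (Fs n u)).le_opNorm _
                _ ≤ M * ‖G u - gs n u‖ := by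
                    rw [norm_sub_rev]
                    exact mul_le_mul_of_nonneg_right (hM _ (hmem n u hu1)) (norm_nonneg _)
            · rw [← ContinuousLinearMap.sub_apply]
              calc ‖(Φ' (Fs n u) - Φ' (F u)) (G u)‖
                  ≤ ‖Φ' (Fs n u) - Φ' (F u)‖ * ‖G u‖ := ContinuousLinearMap.le_opNorm _ _
                _ ≤ (ε/(2*(C+1))) * ‖G u‖ := by
                    refine mul_le_mul_of_nonneg_right ?_ (norm_nonneg _)
                    rw [dist_eq_norm] at huc
                    exact huc.le
    have hbndII : IntervalIntegrable
        (fun u => M * ‖G u - gs n u‖ + (ε/(2*(C+1))) * ‖G u‖) volume 0 x :=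
      (((hsubint n).norm.const_mul M).add (hG.norm.const_mul _)).intervalIntegrable
    calc ‖∫ u in (0:ℝ)..x, (Φ' (Fs n u) (gs n u) - Φ' (F u) (G u))‖
        ≤ ∫ u in (0:ℝ)..x, ‖Φ' (Fs n u) (gs n u) - Φ' (F u) (G u)‖ :=
          intervalIntegral.norm_integral_le_integral_norm hx0
      _ ≤ ∫ u in (0:ℝ)..x, (M * ‖G u - gs n u‖ + (ε/(2*(C+1))) * ‖G u‖) := by
          refine intervalIntegral.integral_mono_on hx0 ((hnII.sub hlimII).norm) hbndII hbnd
      _ = M * (∫ u in (0:ℝ)..x, ‖G u - gs n u‖)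
          + (ε/(2*(C+1))) * ∫ u in (0:ℝ)..x, ‖G u‖ := by
          rw [intervalIntegral.integral_add (((hsubint n).norm.const_mul M).intervalIntegrable)
            ((hG.norm.const_mul _).intervalIntegrable),
            intervalIntegral.integral_const_mul, intervalIntegral.integral_const_mul]
      _ ≤ M * (1/((n:ℝ)+1)) + (ε/(2*(C+1))) * C := by
          refine add_le_add ?_ ?_
          · refine mul_le_mul_of_nonneg_left ?_ hM0
            refine le_trans ?_ (hge n)
            rw [intervalIntegral.integral_of_le hx0]
            exact setIntegral_le_integral (hsubint n).norm
              (Eventually.of_forall fun u => norm_nonneg _)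
          · refine mul_le_mul_of_nonneg_left ?_ hε'.le
            rw [intervalIntegral.integral_of_le hx0]
            exact setIntegral_le_integral hG.norm (Eventually.of_forall fun u => norm_nonneg _)
      _ < ε/2 + ε/2 := by
          refine add_lt_add_of_lt_of_le hn2 ?_
          rw [div_mul_eq_mul_div, mul_comm]
          rw [div_le_div_iff₀ (by positivity) (by norm_num)]
          ring_nf
          nlinarith [hε.le, hC0]
      _ = ε := by ring
  refine tendsto_nhds_unique hL1 ?_
  exact (tendsto_const_nhds.add hL2).congr fun n => (hFTC n).symm

private lemma logrep {c g : ℝ → ℂ} (hc : ∀ x, c x ≠ 0)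
    (hgi : IntegrableOn g (Set.Icc (0:ℝ) 1) volume)
    (hwi : IntegrableOn (fun u => g u / c u) (Set.Icc (0:ℝ) 1) volume)
    (hrep : ∀ x ∈ Set.Icc (0:ℝ) 1, c x = c 0 + ∫ u in (0:ℝ)..x, g u) :
    ∀ x ∈ Set.Icc (0:ℝ) 1,
      c x = c 0 * Complex.exp (∫ u in (0:ℝ)..x, g u / c u) := by
  set w : ℝ → ℂ := fun u => g u / c u with hwdef
  set wI : ℝ → ℂ := (Set.Icc (0:ℝ) 1).indicator w with hwIdef
  set gI : ℝ → ℂ := (Set.Icc (0:ℝ) 1).indicator g with hgIdef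
  have hwII : Integrable wI volume := hwi.integrable_indicator measurableSet_Icc
  have hgII : Integrable gI volume := hgi.integrable_indicator measurableSet_Icc
  have hindw : ∀ x ∈ Set.Icc (0:ℝ) 1,
      (∫ u in (0:ℝ)..x, wI u) = ∫ u in (0:ℝ)..x, w u := by
    intro x hx
    refine intervalIntegral.integral_congr fun u hu => ?_
    rw [Set.uIcc_of_le hx.1] at hu
    have hmem : u ∈ Set.Icc (0:ℝ) 1 := ⟨hu.1, le_trans hu.2 hx.2⟩
    exact Set.indicator_of_mem hmem w
  have hindg : ∀ x ∈ Set.Icc (0:ℝ) 1,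
      (∫ u in (0:ℝ)..x, gI u) = ∫ u in (0:ℝ)..x, g u := by
    intro x hx
    refine intervalIntegral.integral_congr fun u hu => ?_
    rw [Set.uIcc_of_le hx.1] at hu
    have hmem : u ∈ Set.Icc (0:ℝ) 1 := ⟨hu.1, le_trans hu.2 hx.2⟩
    exact Set.indicator_of_mem hmem g
  set F : ℝ → ℂ × ℂ := fun x => (c x, ∫ u in (0:ℝ)..x, wI u) with hFdef
  set G : ℝ → ℂ × ℂ := fun u => (gI u, wI u) with hGdef
  have hGint : Integrable G volume := hgII.prodMk hwII
  have hpair : ∀ x : ℝ, (∫ u in (0:ℝ)..x, G u)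
      = (∫ u in (0:ℝ)..x, gI u, ∫ u in (0:ℝ)..x, wI u) := by
    intro x
    have h1 := (ContinuousLinearMap.fst ℝ ℂ ℂ).intervalIntegral_comp_comm
      (hGint.intervalIntegrable (a := 0) (b := x))
    have h2 := (ContinuousLinearMap.snd ℝ ℂ ℂ).intervalIntegral_comp_comm
      (hGint.intervalIntegrable (a := 0) (b := x))
    exact Prod.ext (by simpa using h1.symm) (by simpa using h2.symm)
  have hF : ∀ x ∈ Set.Icc (0:ℝ) 1, F x = F 0 + ∫ u in (0:ℝ)..x, G u := by
    intro x hx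
    rw [hpair x]
    refine Prod.ext ?_ ?_
    · simpa [hFdef, hindg x hx] using hrep x hx
    · simp [hFdef]
  set Φ : ℂ × ℂ → ℂ := fun p => p.1 * Complex.exp (-p.2) with hΦdef
  set Φ' : (ℂ × ℂ) → (ℂ × ℂ) →L[ℝ] ℂ := fun p =>
    Complex.exp (-p.2) • (ContinuousLinearMap.fst ℝ ℂ ℂ)
      - (p.1 * Complex.exp (-p.2)) • (ContinuousLinearMap.snd ℝ ℂ ℂ) with hΦ'def
  have hexpc : Continuous fun p : ℂ × ℂ => Complex.exp (-p.2) :=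
    Complex.continuous_exp.comp continuous_snd.neg
  have hΦ'c : Continuous Φ' := by
    refine Continuous.sub ?_ ?_
    · exact hexpc.smul continuous_const
    · exact (continuous_fst.mul hexpc).smul continuous_const
  have hΦd : ∀ y, HasFDerivAt Φ (Φ' y) y := by
    intro y
    have h1 : HasFDerivAt (fun p : ℂ × ℂ => p.1) (ContinuousLinearMap.fst ℝ ℂ ℂ) y :=
      hasFDerivAt_fst
    have hn : HasFDerivAt (fun p : ℂ × ℂ => -p.2) (-(ContinuousLinearMap.snd ℝ ℂ ℂ)) y :=
      hasFDerivAt_snd.neg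
    have h2 : HasFDerivAt (fun p : ℂ × ℂ => Complex.exp (-p.2))
        (Complex.exp (-y.2) • -(ContinuousLinearMap.snd ℝ ℂ ℂ)) y :=
      (Complex.hasDerivAt_exp (-y.2)).comp_hasFDerivAt y hn
    have := h1.mul h2
    refine this.congr_fderiv ?_
    refine ContinuousLinearMap.ext fun v => ?_
    simp [hΦ'def, smul_eq_mul]
    ring
  have hzero : ∀ u, Φ' (F u) (G u) = 0 := by
    intro u
    by_cases hu : u ∈ Set.Icc (0:ℝ) 1
    · simp only [hΦ'def, hGdef, hFdef, ContinuousLinearMap.sub_apply,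
        ContinuousLinearMap.smul_apply, ContinuousLinearMap.coe_fst',
        ContinuousLinearMap.coe_snd', smul_eq_mul, hgIdef, hwIdef,
        Set.indicator_of_mem hu, hwdef]
      field_simp [hc u]
      ring
    · simp [hΦ'def, hGdef, hgIdef, hwIdef, Set.indicator_of_notMem hu]
  intro x hx
  have hkey := ACchain hΦd hΦ'c hGint hF hx
  simp only [hzero, intervalIntegral.integral_zero, add_zero] at hkey
  have hF0 : Φ (F 0) = c 0 := by
    simp [hΦdef, hFdef]
  rw [hF0] at hkey
  -- hkey : Φ (F x) = c 0
  have hWx : (∫ u in (0:ℝ)..x, wI u) = ∫ u in (0:ℝ)..x, w u := hindw x hx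
  have : c x * Complex.exp (-(∫ u in (0:ℝ)..x, w u)) = c 0 := by
    rw [← hWx]; exact hkey
  have hexp := Complex.exp_ne_zero (∫ u in (0:ℝ)..x, w u)
  rw [Complex.exp_neg] at this
  field_simp at this
  rw [hwdef] at this
  linear_combination this

set_option maxHeartbeats 1000000 in
private lemma fenchel {c g : ℝ → ℂ} (hc : ∀ x, c x ≠ 0)
    (hgi : IntegrableOn g (Set.Icc (0:ℝ) 1) volume)
    (hrep : ∀ x ∈ Set.Icc (0:ℝ) 1, c x = c 0 + ∫ u in (0:ℝ)..x, g u)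
    (hper : c 1 = c 0) (hzero : (∫ x in (0:ℝ)..1, c x) = 0) :
    2 * Real.pi ≤ ∫ x in (0:ℝ)..1, |(g x / c x).im| := by
  have h01 : (0:ℝ) ≤ 1 := zero_le_one
  -- continuity of c on Icc 0 1
  have hcc : ContinuousOn c (Icc (0:ℝ) 1) := by
    have h1 : ContinuousOn (fun y => c 0 + ∫ u in (0:ℝ)..y, g u) (Icc (0:ℝ) 1) := by
      refine continuousOn_const.add ?_
      have := intervalIntegral.continuousOn_primitive_interval
        (f := g) (μ := volume) (a := (0:ℝ)) (b := 1) (by rwa [Set.uIcc_of_le h01])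
      rwa [Set.uIcc_of_le h01] at this
    exact h1.congr hrep
  -- lower bound for ‖c‖
  obtain ⟨x₀, hx₀, hmin⟩ := isCompact_Icc.exists_isMinOn (Set.nonempty_Icc.2 h01) hcc.norm
  set r : ℝ := ‖c x₀‖ with hrdef
  have hr0 : 0 < r := norm_pos_iff.2 (hc x₀)
  have hr : ∀ u ∈ Icc (0:ℝ) 1, r ≤ ‖c u‖ := fun u hu => hmin hu
  -- integrability of w = g/c
  set w : ℝ → ℂ := fun u => g u / c u with hwdef
  have hwi : IntegrableOn w (Icc (0:ℝ) 1) volume := by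
    have hmeas : AEStronglyMeasurable w (volume.restrict (Icc (0:ℝ) 1)) := by
      have h1 : AEMeasurable g (volume.restrict (Icc (0:ℝ) 1)) := hgi.aemeasurable
      have h2 : AEMeasurable c (volume.restrict (Icc (0:ℝ) 1)) :=
        (hcc.aestronglyMeasurable measurableSet_Icc).aemeasurable
      exact (h1.div h2).aestronglyMeasurable
    refine Integrable.mono' (hgi.norm.const_mul r⁻¹) hmeas ?_
    refine (ae_restrict_iff' measurableSet_Icc).2 (Eventually.of_forall fun u hu => ?_)
    rw [hwdef]
    simp only [norm_div]
    rw [div_eq_inv_mul]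
    exact mul_le_mul_of_nonneg_right (inv_anti₀ hr0 (hr u hu)) (norm_nonneg _)
  have hwim : IntegrableOn (fun u => (w u).im) (Icc (0:ℝ) 1) volume := hwi.im
  have hwabs : IntegrableOn (fun u => |(w u).im|) (Icc (0:ℝ) 1) volume := hwim.abs
  have hwII : ∀ a b, a ∈ Icc (0:ℝ) 1 → b ∈ Icc (0:ℝ) 1 → IntervalIntegrable w volume a b := by
    intro a b ha hb
    refine IntegrableOn.intervalIntegrable (hwi.mono_set ?_)
    exact Set.uIcc_subset_Icc ha hb
  have himII : ∀ a b, a ∈ Icc (0:ℝ) 1 → b ∈ Icc (0:ℝ) 1 →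
      IntervalIntegrable (fun u => (w u).im) volume a b := by
    intro a b ha hb
    refine IntegrableOn.intervalIntegrable (hwim.mono_set ?_)
    exact Set.uIcc_subset_Icc ha hb
  have habsII : ∀ a b, a ∈ Icc (0:ℝ) 1 → b ∈ Icc (0:ℝ) 1 →
      IntervalIntegrable (fun u => |(w u).im|) volume a b := by
    intro a b ha hb
    refine IntegrableOn.intervalIntegrable (hwabs.mono_set ?_)
    exact Set.uIcc_subset_Icc ha hb
  have h0mem : (0:ℝ) ∈ Icc (0:ℝ) 1 := ⟨le_refl _, h01⟩
  have h1mem : (1:ℝ) ∈ Icc (0:ℝ) 1 := ⟨h01, le_refl _⟩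
  -- the log representation
  have hlog := logrep hc hgi hwi hrep
  set W : ℝ → ℂ := fun x => ∫ u in (0:ℝ)..x, w u with hWdef
  set θ : ℝ → ℝ := fun x => ∫ u in (0:ℝ)..x, (w u).im with hθdef
  set T : ℝ → ℝ := fun x => ∫ u in (0:ℝ)..x, |(w u).im| with hTdef
  have him : ∀ x ∈ Icc (0:ℝ) 1, (W x).im = θ x := by
    intro x hx
    have := Complex.imCLM.intervalIntegral_comp_comm (hwII 0 x h0mem hx)
    simpa [hWdef, hθdef] using this.symm
  have hθ0 : θ 0 = 0 := intervalIntegral.integral_same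
  have hT0 : T 0 = 0 := intervalIntegral.integral_same
  -- variation bound
  have hTbound : ∀ a b, a ∈ Icc (0:ℝ) 1 → b ∈ Icc (0:ℝ) 1 → a ≤ b →
      |θ b - θ a| ≤ T b - T a := by
    intro a b ha hb hab
    have hsub : θ b - θ a = ∫ u in a..b, (w u).im :=
      intervalIntegral.integral_interval_sub_left (himII 0 b h0mem hb) (himII 0 a h0mem ha)
    have hsubT : T b - T a = ∫ u in a..b, |(w u).im| :=
      intervalIntegral.integral_interval_sub_left (habsII 0 b h0mem hb) (habsII 0 a h0mem ha)
    rw [hsub, hsubT]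
    exact intervalIntegral.abs_integral_le_integral_abs hab
  -- winding number
  have hexp1 : Complex.exp (W 1) = 1 := by
    have h1 := hlog 1 h1mem
    rw [hper] at h1
    exact mul_left_cancel₀ (hc 0) (h1.symm.trans (mul_one (c 0)).symm)
  obtain ⟨n, hn⟩ := Complex.exp_eq_one_iff.1 hexp1
  have hθ1 : θ 1 = n * (2 * Real.pi) := by
    have := him 1 h1mem
    rw [hn] at this
    rw [← this]
    simp [Complex.mul_im]
  have hgoal : (∫ x in (0:ℝ)..1, |(g x / c x).im|) = T 1 := rfl
  rw [hgoal]
  by_cases hn0 : n = 0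
  · -- flat case : use that the average of c is zero
    have hθ1' : θ 1 = 0 := by rw [hθ1, hn0]; simp
    have hθc : ContinuousOn θ (Icc (0:ℝ) 1) := by
      have := intervalIntegral.continuousOn_primitive_interval
        (f := fun u => (w u).im) (μ := volume) (a := (0:ℝ)) (b := 1)
        (by rwa [Set.uIcc_of_le h01])
      rwa [Set.uIcc_of_le h01] at this
    obtain ⟨xM, hxM, hMax⟩ := isCompact_Icc.exists_isMaxOn (Set.nonempty_Icc.2 h01) hθc
    obtain ⟨xm, hxm, hMin⟩ := isCompact_Icc.exists_isMinOn (Set.nonempty_Icc.2 h01) hθc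
    set M : ℝ := θ xM with hMdef
    set m : ℝ := θ xm with hmdef
    have hmM : ∀ u ∈ Icc (0:ℝ) 1, m ≤ θ u ∧ θ u ≤ M := fun u hu => ⟨hMin hu, hMax hu⟩
    have hm0 : m ≤ 0 := by have := (hmM 0 h0mem).1; rwa [hθ0] at this
    have hM0 : 0 ≤ M := by have := (hmM 0 h0mem).2; rwa [hθ0] at this
    have hMm : Real.pi ≤ M - m := by
      by_contra hlt
      push_neg at hlt
      set φ₀ : ℝ := (M + m)/2 with hφ₀def
      set e : ℂ := (starRingEnd ℂ) (c 0) * Complex.exp (-(φ₀ * Complex.I)) with hedef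
      have hposre : 0 < Complex.normSq (c 0) := Complex.normSq_pos.2 (hc 0)
      have hpos : ∀ u ∈ Ioo (0:ℝ) 1, 0 < (e * c u).re := by
        intro u hu
        have hu' : u ∈ Icc (0:ℝ) 1 := ⟨hu.1.le, hu.2.le⟩
        rw [hlog u hu']
        have hcc0 : (starRingEnd ℂ) (c 0) * c 0 = (Complex.normSq (c 0) : ℂ) := by
          rw [mul_comm, Complex.mul_conj]
        have harr : e * (c 0 * Complex.exp (∫ u in (0:ℝ)..u, g u / c u)) =
            (Complex.normSq (c 0) : ℂ) * Complex.exp (W u - φ₀ * Complex.I) := by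
          rw [hedef, sub_eq_add_neg, Complex.exp_add, ← hcc0, hWdef, hwdef]
          ring
        rw [harr]
        have him' : (W u - (φ₀:ℂ) * Complex.I).im = θ u - φ₀ := by
          rw [Complex.sub_im, him u hu']
          simp
        rw [Complex.re_ofReal_mul, Complex.exp_re, him']
        have hub := (hmM u hu').2
        have hlb := (hmM u hu').1
        have hcos : 0 < Real.cos (θ u - φ₀) := by
          apply Real.cos_pos_of_mem_Ioo
          constructor
          · simp only [hφ₀def]; linarith
          · simp only [hφ₀def]; linarith
        exact mul_pos hposre (mul_pos (Real.exp_pos _) hcos)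
      have hInt : IntervalIntegrable (fun u => (e * c u).re) volume 0 1 := by
        apply ContinuousOn.intervalIntegrable
        rw [Set.uIcc_of_le h01]
        exact Complex.continuous_re.comp_continuousOn (continuousOn_const.mul hcc)
      have hpos' : 0 < ∫ u in (0:ℝ)..1, (e * c u).re :=
        intervalIntegral.intervalIntegral_pos_of_pos_on hInt hpos zero_lt_one
      have hcint : IntervalIntegrable c volume 0 1 := by
        apply ContinuousOn.intervalIntegrable
        rwa [Set.uIcc_of_le h01]
      have hzero' : (∫ u in (0:ℝ)..1, (e * c u).re) = 0 := by
        have h2 := Complex.reCLM.intervalIntegral_comp_comm (hcint.const_mul e)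
        have h1 : (∫ u in (0:ℝ)..1, e * c u) = e * ∫ u in (0:ℝ)..1, c u :=
          intervalIntegral.integral_const_mul e c
        have : (∫ u in (0:ℝ)..1, (e * c u).re) = (e * ∫ u in (0:ℝ)..1, c u).re := by
          rw [← h1]
          exact h2
        rw [this, hzero, mul_zero, Complex.zero_re]
      exact absurd hzero' (ne_of_gt hpos')
    rcases le_total xm xM with hord | hord
    · have u1 := hTbound 0 xm h0mem hxm hxm.1
      have u2 := hTbound xm xM hxm hxM hord
      have u3 := hTbound xM 1 hxM h1mem hxM.2
      have a1 : -(θ xm - θ 0) ≤ |θ xm - θ 0| := neg_le_abs _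
      have a2 : (θ xM - θ xm) ≤ |θ xM - θ xm| := le_abs_self _
      have a3 : -(θ 1 - θ xM) ≤ |θ 1 - θ xM| := neg_le_abs _
      linarith
    · have u1 := hTbound 0 xM h0mem hxM hxM.1
      have u2 := hTbound xM xm hxM hxm hord
      have u3 := hTbound xm 1 hxm h1mem hxm.2
      have a1 : (θ xM - θ 0) ≤ |θ xM - θ 0| := le_abs_self _
      have a2 : -(θ xm - θ xM) ≤ |θ xm - θ xM| := neg_le_abs _
      have a3 : (θ 1 - θ xm) ≤ |θ 1 - θ xm| := le_abs_self _
      linarith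
  · -- nontrivial winding
    have h1n : (1:ℝ) ≤ |(n:ℝ)| := by
      rw [← Int.cast_abs]
      exact_mod_cast Int.one_le_abs hn0
    have := hTbound 0 1 h0mem h1mem h01
    rw [hθ0, hθ1, hT0, sub_zero, sub_zero, abs_mul] at this
    have hπ : |2 * Real.pi| = 2 * Real.pi := abs_of_pos (by positivity)
    rw [hπ] at this
    nlinarith [Real.pi_pos]

/-- **Lemma 2.2.** For `p ≥ 2` and a closed curve `γ ∈ W^{2,p}(S¹;ℝ²)`,
`L(γ) ≥ ((2π)^p / (p E_p(γ)))^{1/(p−1)}`. -/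
theorem length_lower_bound_via_energy (p : ℝ) (hp : 2 ≤ p)
    (γ : CurveW2p p) (hreg : ∀ x, γ.f' x ≠ 0) :
    γ.len ≥ ((2 * π) ^ p / (p * Ep p γ)) ^ (1 / (p - 1)) := by
  have hp0 : (0:ℝ) < p := by linarith
  have hp1 : (1:ℝ) < p := by linarith
  have hpm1 : (0:ℝ) < p - 1 := by linarith
  have h01 : (0:ℝ) ≤ 1 := zero_le_one
  have h0mem : (0:ℝ) ∈ Set.Icc (0:ℝ) 1 := ⟨le_refl _, h01⟩
  haveI hfin : Fact (volume (Set.Ioc (0:ℝ) 1) < ⊤) := ⟨by simp⟩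
  -- the complex embedding
  set T : V2 →L[ℝ] ℂ := Complex.ofRealCLM.comp (EuclideanSpace.proj (0 : Fin 2))
    + Complex.I • Complex.ofRealCLM.comp (EuclideanSpace.proj (1 : Fin 2)) with hTdef
  have hre : ∀ v : V2, (T v).re = v 0 := by
    intro v
    simp [hTdef, Complex.mul_re]
  have him : ∀ v : V2, (T v).im = v 1 := by
    intro v
    simp [hTdef, Complex.mul_im]
  have hnorm : ∀ v : V2, ‖T v‖ = ‖v‖ := by
    intro v
    rw [EuclideanSpace.norm_eq, Complex.norm_def,
      Complex.normSq_apply, hre, him, Fin.sum_univ_two]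
    congr 1
    simp [Real.norm_eq_abs, sq_abs]
    ring
  have hTinj : ∀ v : V2, T v = 0 → v = 0 := by
    intro v hv
    have h0 : v 0 = 0 := by rw [← hre v, hv]; simp
    have h1 : v 1 = 0 := by rw [← him v, hv]; simp
    ext i
    fin_cases i
    · exact h0
    · exact h1
  have hRotApply0 : ∀ v : V2, Rot v 0 = -(v 1) := by
    intro v; simp [Rot]
  have hRotApply1 : ∀ v : V2, Rot v 1 = v 0 := by
    intro v; simp [Rot]
  have hinner : ∀ a b : V2, ⟪a, Rot b⟫ = (T a).im * (T b).re - (T a).re * (T b).im := by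
    intro a b
    rw [PiLp.inner_apply, Fin.sum_univ_two, hRotApply0, hRotApply1, hre, him, hre, him]
    simp [RCLike.inner_apply]
    ring
  have hRotnorm : ∀ v : V2, ‖Rot v‖ = ‖v‖ := by
    intro v
    rw [EuclideanSpace.norm_eq, EuclideanSpace.norm_eq, Fin.sum_univ_two, Fin.sum_univ_two,
      hRotApply0, hRotApply1]
    congr 1
    simp [Real.norm_eq_abs, sq_abs]
    ring
  -- integrability of f'' and continuity of f'
  have hmem1 : 1 ≤ ENNReal.ofReal p := ENNReal.one_le_ofReal.2 (by linarith)
  have hf''Ioc : IntegrableOn γ.f'' (Set.Ioc (0:ℝ) 1) volume := γ.memLp.integrable hmem1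
  have hf''Icc : IntegrableOn γ.f'' (Set.Icc (0:ℝ) 1) volume :=
    (integrableOn_Icc_iff_integrableOn_Ioc (ha := enorm_ne_top)).2 hf''Ioc
  have hf'c : ContinuousOn γ.f' (Set.Icc (0:ℝ) 1) := by
    have h1 : ContinuousOn (fun y => γ.f' 0 + ∫ u in (0:ℝ)..y, γ.f'' u) (Set.Icc (0:ℝ) 1) := by
      refine continuousOn_const.add ?_
      have := intervalIntegral.continuousOn_primitive_interval
        (f := γ.f'') (μ := volume) (a := (0:ℝ)) (b := 1) (by rwa [Set.uIcc_of_le h01])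
      rwa [Set.uIcc_of_le h01] at this
    exact h1.congr fun x _ => γ.hf'' x
  have hf''II : ∀ x ∈ Set.Icc (0:ℝ) 1, IntervalIntegrable γ.f'' volume 0 x := by
    intro x hx
    exact (hf''Icc.mono_set (Set.uIcc_subset_Icc h0mem hx)).intervalIntegrable
  -- the complex curve
  set c : ℝ → ℂ := fun x => T (γ.f' x) with hcdef
  set g : ℝ → ℂ := fun x => T (γ.f'' x) with hgdef
  have hcrep : ∀ x ∈ Set.Icc (0:ℝ) 1, c x = c 0 + ∫ u in (0:ℝ)..x, g u := by
    intro x hx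
    rw [hcdef]
    simp only
    rw [γ.hf'' x, map_add, ← T.intervalIntegral_comp_comm (hf''II x hx)]
  have hgIcc : IntegrableOn g (Set.Icc (0:ℝ) 1) volume := T.integrable_comp hf''Icc
  have hcne : ∀ x, c x ≠ 0 := by
    intro x hx
    exact hreg x (hTinj _ hx)
  have hcper : c 1 = c 0 := by
    rw [hcdef]
    simp only
    have := γ.per' 0
    rw [zero_add] at this
    rw [this]
  have hf'II : IntervalIntegrable γ.f' volume 0 1 := by
    apply ContinuousOn.intervalIntegrable
    rwa [Set.uIcc_of_le h01]
  have hczero : (∫ x in (0:ℝ)..1, c x) = 0 := by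
    have hFTC : (∫ x in (0:ℝ)..1, γ.f' x) = γ.f 1 - γ.f 0 :=
      intervalIntegral.integral_eq_sub_of_hasDerivAt (fun x _ => γ.hf' x) hf'II
    have hf10 : γ.f 1 = γ.f 0 := by
      have := γ.per 0
      rwa [zero_add] at this
    rw [hcdef]
    simp only
    rw [T.intervalIntegral_comp_comm hf'II, hFTC, hf10, sub_self, map_zero]
  have hfen := fenchel hcne hgIcc hcrep hcper hczero
  -- lower bound for the speed
  obtain ⟨x₀, hx₀, hminOn⟩ := isCompact_Icc.exists_isMinOn (Set.nonempty_Icc.2 h01) hf'c.norm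
  set r : ℝ := ‖γ.f' x₀‖ with hrdef
  have hr0 : 0 < r := norm_pos_iff.2 (hreg x₀)
  have hrle : ∀ u ∈ Set.Icc (0:ℝ) 1, r ≤ ‖γ.f' u‖ := fun u hu => hminOn hu
  -- the two Hölder factors
  set A : ℝ → ℝ := fun x => |⟪γ.f'' x, Rot (γ.f' x)⟫| / ‖γ.f' x‖ ^ ((3*p-1)/p) with hAdef
  set B : ℝ → ℝ := fun x => ‖γ.f' x‖ ^ ((p-1)/p) with hBdef
  have hAB : ∀ x : ℝ, |(g x / c x).im| = A x * B x := by
    intro x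
    have hb : (0:ℝ) < ‖γ.f' x‖ := norm_pos_iff.2 (hreg x)
    have h1 : (g x / c x).im = ⟪γ.f'' x, Rot (γ.f' x)⟫ / ‖γ.f' x‖ ^ (2:ℝ) := by
      rw [Complex.div_im, hcdef, hgdef]
      simp only
      have hns : Complex.normSq (T (γ.f' x)) = ‖γ.f' x‖ ^ (2:ℝ) := by
        rw [Complex.normSq_eq_norm_sq, hnorm,
          ← Real.rpow_natCast ‖γ.f' x‖ 2]
        norm_num
      rw [hns, hinner]
      ring
    rw [h1, abs_div, abs_of_nonneg (Real.rpow_nonneg (norm_nonneg _) (2:ℝ))]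
    have e1 : A x * B x
        = |⟪γ.f'' x, Rot (γ.f' x)⟫| * (‖γ.f' x‖ ^ ((p-1)/p) / ‖γ.f' x‖ ^ ((3*p-1)/p)) := by
      rw [hAdef, hBdef]; ring
    rw [e1, ← Real.rpow_sub hb]
    have e2 : (p-1)/p - (3*p-1)/p = -2 := by
      rw [div_sub_div_same, div_eq_iff hp0.ne']
      ring
    rw [e2, show ((-2:ℝ)) = -(2:ℝ) by norm_num, Real.rpow_neg hb.le, div_eq_mul_inv]
  have hcong : (∫ x in (0:ℝ)..1, |(g x / c x).im|) = ∫ x in (0:ℝ)..1, A x * B x :=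
    intervalIntegral.integral_congr fun x _ => hAB x
  rw [hcong, intervalIntegral.integral_of_le h01] at hfen
  -- measurability
  set μ : Measure ℝ := volume.restrict (Set.Ioc (0:ℝ) 1) with hμdef
  have hq := Real.HolderConjugate.conjExponent hp1
  have hqrfl : p.conjExponent = p/(p-1) := rfl
  have hf'mIoc : AEStronglyMeasurable γ.f' μ :=
    (hf'c.mono Set.Ioc_subset_Icc_self).aestronglyMeasurable measurableSet_Ioc
  have hf''m : AEStronglyMeasurable γ.f'' μ := γ.memLp.1
  have hRotc : Continuous Rot := by
    have h1 : Continuous fun v : V2 => (![-(v 1), v 0] : Fin 2 → ℝ) := by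
      refine continuous_pi fun i => ?_
      fin_cases i
      · simpa using (show Continuous fun v : V2 => -(v 1) from
          ((EuclideanSpace.proj (1 : Fin 2)).continuous).neg)
      · simpa using (EuclideanSpace.proj (0 : Fin 2)).continuous
    exact (PiLp.continuous_toLp 2 (fun _ : Fin 2 => ℝ)).comp h1
  have hinnm : AEStronglyMeasurable (fun x => ⟪γ.f'' x, Rot (γ.f' x)⟫) μ :=
    hf''m.inner (hRotc.comp_aestronglyMeasurable hf'mIoc)
  have hnumm : AEStronglyMeasurable (fun x => |⟪γ.f'' x, Rot (γ.f' x)⟫|) μ := by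
    have := hinnm.norm
    simpa [Real.norm_eq_abs] using this
  have hdenc : ContinuousOn (fun x => ‖γ.f' x‖ ^ ((3*p-1)/p)) (Set.Icc (0:ℝ) 1) :=
    hf'c.norm.rpow_const fun x _ => Or.inr (div_nonneg (by linarith) hp0.le)
  have hdenm : AEStronglyMeasurable (fun x => ‖γ.f' x‖ ^ ((3*p-1)/p)) μ :=
    (hdenc.mono Set.Ioc_subset_Icc_self).aestronglyMeasurable measurableSet_Ioc
  have hAm : AEStronglyMeasurable A μ :=
    (hnumm.aemeasurable.div hdenm.aemeasurable).aestronglyMeasurable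
  have hBc : ContinuousOn B (Set.Icc (0:ℝ) 1) :=
    hf'c.norm.rpow_const fun x _ => Or.inr (div_nonneg (by linarith) hp0.le)
  have hBm : AEStronglyMeasurable B μ :=
    (hBc.mono Set.Ioc_subset_Icc_self).aestronglyMeasurable measurableSet_Ioc
  -- MemLp bounds
  have hAbound : ∀ᵐ x ∂μ, ‖A x‖ ≤ (r ^ (-((2*p-1)/p))) * ‖γ.f'' x‖ := by
    rw [hμdef]
    refine (ae_restrict_iff' measurableSet_Ioc).2 (Eventually.of_forall fun x hx => ?_)
    have hx' : x ∈ Set.Icc (0:ℝ) 1 := ⟨hx.1.le, hx.2⟩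
    have hb : (0:ℝ) < ‖γ.f' x‖ := norm_pos_iff.2 (hreg x)
    have hAnn : 0 ≤ A x := div_nonneg (abs_nonneg _) (Real.rpow_nonneg (norm_nonneg _) _)
    rw [Real.norm_eq_abs, abs_of_nonneg hAnn]
    have step1 : A x ≤ ‖γ.f'' x‖ * ‖γ.f' x‖ ^ (1 - (3*p-1)/p) := by
      rw [hAdef]
      simp only
      rw [div_le_iff₀ (Real.rpow_pos_of_pos hb _)]
      calc |⟪γ.f'' x, Rot (γ.f' x)⟫| ≤ ‖γ.f'' x‖ * ‖Rot (γ.f' x)‖ :=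
            abs_real_inner_le_norm _ _
        _ = ‖γ.f'' x‖ * ‖γ.f' x‖ ^ (1:ℝ) := by rw [hRotnorm, Real.rpow_one]
        _ = ‖γ.f'' x‖ * (‖γ.f' x‖ ^ (1 - (3*p-1)/p) * ‖γ.f' x‖ ^ ((3*p-1)/p)) := by
            rw [← Real.rpow_add hb]
            ring_nf
        _ = ‖γ.f'' x‖ * ‖γ.f' x‖ ^ (1 - (3*p-1)/p) * ‖γ.f' x‖ ^ ((3*p-1)/p) := by ring
    have hexpneg : 1 - (3*p-1)/p = -((2*p-1)/p) := by
      field_simp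
      ring
    have step2 : ‖γ.f' x‖ ^ (1 - (3*p-1)/p) ≤ r ^ (-((2*p-1)/p)) := by
      rw [hexpneg]
      refine Real.rpow_le_rpow_of_nonpos hr0 (hrle x hx') ?_
      rw [neg_nonpos]
      exact div_nonneg (by linarith) hp0.le
    calc A x ≤ ‖γ.f'' x‖ * ‖γ.f' x‖ ^ (1 - (3*p-1)/p) := step1
      _ ≤ ‖γ.f'' x‖ * r ^ (-((2*p-1)/p)) := mul_le_mul_of_nonneg_left step2 (norm_nonneg _)
      _ = r ^ (-((2*p-1)/p)) * ‖γ.f'' x‖ := mul_comm _ _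
  have hA : MemLp A (ENNReal.ofReal p) μ := MemLp.of_le_mul γ.memLp hAm hAbound
  obtain ⟨Cb, hCb⟩ := isCompact_Icc.exists_bound_of_continuousOn hBc
  have hBbound : ∀ᵐ x ∂μ, ‖B x‖ ≤ Cb := by
    rw [hμdef]
    refine (ae_restrict_iff' measurableSet_Ioc).2 (Eventually.of_forall fun x hx => ?_)
    exact hCb x ⟨hx.1.le, hx.2⟩
  have hB : MemLp B (ENNReal.ofReal p.conjExponent) μ :=
    (memLp_top_of_bound hBm Cb hBbound).mono_exponent le_top
  have h0A : 0 ≤ᵐ[μ] A := Eventually.of_forall fun x =>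
    div_nonneg (abs_nonneg _) (Real.rpow_nonneg (norm_nonneg _) _)
  have h0B : 0 ≤ᵐ[μ] B := Eventually.of_forall fun x => Real.rpow_nonneg (norm_nonneg _) _
  have hHolder := MeasureTheory.integral_mul_le_Lp_mul_Lq_of_nonneg hq h0A h0B hA hB
  -- identify the integrals
  have hAp : (∫ x, A x ^ p ∂μ) = p * Ep p γ := by
    have hEp : p * Ep p γ
        = ∫ x in (0:ℝ)..1, |⟪γ.f'' x, Rot (γ.f' x)⟫| ^ p / ‖γ.f' x‖ ^ (3*p - 1) := by
      rw [Ep, ← mul_assoc, mul_one_div_cancel hp0.ne', one_mul]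
    rw [hEp, intervalIntegral.integral_of_le h01]
    refine integral_congr_ae (Eventually.of_forall fun x => ?_)
    rw [hAdef]
    simp only
    rw [Real.div_rpow (abs_nonneg _) (Real.rpow_nonneg (norm_nonneg _) _)]
    congr 1
    rw [← Real.rpow_mul (norm_nonneg _), div_mul_cancel₀ _ hp0.ne']
  have hBq : (∫ x, B x ^ p.conjExponent ∂μ) = γ.len := by
    rw [CurveW2p.len, intervalIntegral.integral_of_le h01]
    refine integral_congr_ae (Eventually.of_forall fun x => ?_)
    rw [hBdef]
    simp only
    rw [← Real.rpow_mul (norm_nonneg _)]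
    have hone : (p-1)/p * p.conjExponent = 1 := by
      rw [hqrfl]
      field_simp
    rw [hone, Real.rpow_one]
  rw [hAp, hBq] at hHolder
  have hkey : 2 * π ≤ (p * Ep p γ) ^ (1/p) * γ.len ^ (1/p.conjExponent) :=
    le_trans hfen hHolder
  -- positivity facts
  have hπ : (0:ℝ) < 2 * π := by positivity
  have hEnn : 0 ≤ p * Ep p γ := by
    rw [← hAp]
    refine integral_nonneg fun x => ?_
    exact Real.rpow_nonneg (div_nonneg (abs_nonneg _) (Real.rpow_nonneg (norm_nonneg _) _)) _
  have hlen0 : 0 ≤ γ.len := by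
    rw [← hBq]
    refine integral_nonneg fun x => ?_
    exact Real.rpow_nonneg (Real.rpow_nonneg (norm_nonneg _) _) _
  have hEpos : 0 < p * Ep p γ := by
    rcases lt_or_eq_of_le hEnn with h | h
    · exact h
    · exfalso
      rw [← h, Real.zero_rpow (by positivity), zero_mul] at hkey
      linarith
  -- raise to the p-th power
  have hq1 : 1/p.conjExponent = (p-1)/p := by
    rw [hqrfl, one_div_div]
  rw [hq1] at hkey
  have h1 := Real.rpow_le_rpow hπ.le hkey hp0.le
  rw [Real.mul_rpow (Real.rpow_nonneg hEnn _) (Real.rpow_nonneg hlen0 _),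
    ← Real.rpow_mul hEnn, one_div_mul_cancel hp0.ne', Real.rpow_one,
    ← Real.rpow_mul hlen0, div_mul_cancel₀ _ hp0.ne'] at h1
  rw [mul_comm (p * Ep p γ) (γ.len ^ (p-1))] at h1
  have hfinal : (2*π)^p / (p * Ep p γ) ≤ γ.len ^ (p-1) := (div_le_iff₀ hEpos).2 h1
  have h2 := Real.rpow_le_rpow
    (div_nonneg (Real.rpow_nonneg hπ.le p) hEnn) hfinal (by positivity : (0:ℝ) ≤ 1/(p-1))
  rw [← Real.rpow_mul hlen0, mul_one_div_cancel hpm1.ne', Real.rpow_one] at h2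
  exact h2

end
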